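/- Let Ω ⊆ ℝⁿ be open, let h: ℝⁿ → ℝᵖ be C² whose Jacobian Dh(x) has rank p at every x ∈ Ω (1 ≤ p ≤ n), let P be a C¹ map from ℝⁿ to the real symmetric positive definite n×n matrices, and let Q be a C¹ map from ℝᵖ to the real symmetric positive definite p×p matrices. Define P_mod on Ω by P_mod(x) = P(x) + Dh(x)ᵀ·(Q(h(x)) − (Dh(x)·P(x)⁻¹·Dh(x)ᵀ)⁻¹)·Dh(x), a C¹ map with symmetric positive definite values, and let Γ and Γ_mod denote the Christoffel symbols of P and of P_mod. Then the following are equivalent: (i) for all x ∈ Ω, all i ∈ {1,…,p} and all v ∈ ℝⁿ with Dh(x)·v = 0, Σ_{a,b} v_a·v_b·(∂²h_i/∂x_a∂x_b(x) − Σ_c Γ^c_{ab}(x)·∂h_i/∂x_c(x)) = 0; (ii) the same statement with Γ replaced by Γ_mod. -/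

import Mathlib

open Matrix

/-- Partial derivative `∂g/∂x_a (x)` of a real-valued function on `ℝ^ι`. -/
noncomputable def pdv {ι : Type*} [Fintype ι] [DecidableEq ι]
    (g : (ι → ℝ) → ℝ) (a : ι) (x : ι → ℝ) : ℝ :=
  fderiv ℝ g x (Pi.single a 1)

/-- Jacobian matrix `Dh(x)` of `h : ℝ^ι → ℝ^κ`. -/
noncomputable def jacobianM {ι κ : Type*} [Fintype ι] [DecidableEq ι] [Fintype κ]
    (h : (ι → ℝ) → (κ → ℝ)) (x : ι → ℝ) : Matrix κ ι ℝ :=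
  Matrix.of fun i a => fderiv ℝ h x (Pi.single a 1) i

/-- Christoffel symbols `Γ^c_{ab}(x)` of a matrix-valued metric `P`. -/
noncomputable def christoffelSym {ι : Type*} [Fintype ι] [DecidableEq ι]
    (P : (ι → ℝ) → Matrix ι ι ℝ) (c a b : ι) (x : ι → ℝ) : ℝ :=
  (1 / 2) * ∑ d, (P x)⁻¹ c d *
    (pdv (fun y => P y a d) b x + pdv (fun y => P y b d) a x - pdv (fun y => P y a b) d x)

/-- The tangential-Hessian condition: for all `x ∈ Ω`, all components `i` of `h`, and all
`v` with `Dh(x)·v = 0`, `Σ_{a,b} v_a·v_b·(∂²h_i/∂x_a∂x_b − Σ_c Γ^c_{ab}·∂h_i/∂x_c) = 0`. -/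
def TangentHessianZero {n p : ℕ} (h : (Fin n → ℝ) → (Fin p → ℝ))
    (M : (Fin n → ℝ) → Matrix (Fin n) (Fin n) ℝ) (Ω : Set (Fin n → ℝ)) : Prop :=
  ∀ x ∈ Ω, ∀ (i : Fin p) (v : Fin n → ℝ), (jacobianM h x).mulVec v = 0 →
    ∑ a, ∑ b, v a * v b *
      (pdv (fun y => pdv (fun z => h z i) b y) a x
        - ∑ c, christoffelSym M c a b x * pdv (fun y => h y i) c x) = 0

variable {n : ℕ}

-- helper A
lemma clm_apply_eq_sum (L : (Fin n → ℝ) →L[ℝ] ℝ) (v : Fin n → ℝ) :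
    L v = ∑ a, v a * L (Pi.single a 1) := by
  have hv : v = ∑ a, v a • (Pi.single a 1 : Fin n → ℝ) := by
    ext j
    simp [Pi.single_apply, Finset.sum_apply]
  conv_lhs => rw [hv]
  rw [map_sum]
  simp [smul_eq_mul]

-- helper B
lemma fderiv_sum_const_mul {κ : Type*} [Fintype κ] (f : κ → (Fin n → ℝ) → ℝ)
    (w : κ → ℝ) (x u : Fin n → ℝ) (hf : ∀ k, DifferentiableAt ℝ (f k) x) :
    fderiv ℝ (fun y => ∑ k, w k * f k y) x u = ∑ k, w k * fderiv ℝ (f k) x u := by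
  rw [fderiv_fun_sum (fun k _ => (hf k).const_mul (w k))]
  simp only [ContinuousLinearMap.coe_sum', Finset.sum_apply]
  refine Finset.sum_congr rfl fun k _ => ?_
  rw [fderiv_const_mul (hf k) (w k)]
  simp

-- helper C
lemma double_contract_eq_fderiv (g : Fin n → (Fin n → ℝ) → ℝ) (v x : Fin n → ℝ)
    (hg : ∀ a, DifferentiableAt ℝ (g a) x) :
    ∑ a, ∑ b, v a * v b * pdv (g a) b x
      = fderiv ℝ (fun y => ∑ a, v a * g a y) x v := by
  rw [fderiv_sum_const_mul g v x v hg]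
  refine Finset.sum_congr rfl fun a _ => ?_
  rw [clm_apply_eq_sum (fderiv ℝ (g a) x) v, Finset.mul_sum]
  refine Finset.sum_congr rfl fun b _ => ?_
  rw [pdv, mul_assoc]

-- helper D
lemma double_contract_eq_pdv (g : Fin n → Fin n → (Fin n → ℝ) → ℝ) (v x : Fin n → ℝ) (d : Fin n)
    (hg : ∀ a b, DifferentiableAt ℝ (g a b) x) :
    ∑ a, ∑ b, v a * v b * pdv (g a b) d x
      = pdv (fun y => ∑ a, ∑ b, v a * v b * g a b y) d x := by
  unfold pdv
  have h1 : ∀ a, DifferentiableAt ℝ (fun y => ∑ b, v b * g a b y) x :=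
    fun a => DifferentiableAt.fun_sum fun b _ => (hg a b).const_mul (v b)
  have : (fun y => ∑ a, ∑ b, v a * v b * g a b y)
      = fun y => ∑ a, v a * ∑ b, v b * g a b y := by
    funext y
    exact Finset.sum_congr rfl fun a _ => by rw [Finset.mul_sum]; exact Finset.sum_congr rfl fun b _ => by ring
  rw [this, fderiv_sum_const_mul _ v x _ h1]
  refine Finset.sum_congr rfl fun a _ => ?_
  rw [fderiv_sum_const_mul _ v x _ (fun b => hg a b), Finset.mul_sum]
  refine Finset.sum_congr rfl fun b _ => by ring

lemma diffAt_finset_prod {ι E : Type*} [NormedAddCommGroup E] [NormedSpace ℝ E]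
    (s : Finset ι) (f : ι → E → ℝ) {x : E}
    (hf : ∀ i ∈ s, DifferentiableAt ℝ (f i) x) :
    DifferentiableAt ℝ (fun y => ∏ i ∈ s, f i y) x := by
  classical
  induction s using Finset.induction with
  | empty => simp
  | insert a s' hi ih =>
    next =>
      simp only [Finset.prod_insert hi]
      exact (hf a (Finset.mem_insert_self a s')).mul
        (ih fun i his => hf i (Finset.mem_insert_of_mem his))

lemma diffAt_matrix_det {m E : Type*} [Fintype m] [DecidableEq m]
    [NormedAddCommGroup E] [NormedSpace ℝ E]
    (M : E → Matrix m m ℝ) {x : E}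
    (hM : ∀ i j, DifferentiableAt ℝ (fun y => M y i j) x) :
    DifferentiableAt ℝ (fun y => (M y).det) x := by
  simp only [Matrix.det_apply']
  exact DifferentiableAt.fun_sum fun σ _ =>
    (diffAt_finset_prod _ _ (fun i _ => hM (σ i) i)).const_mul _

lemma diffAt_matrix_inv {m E : Type*} [Fintype m] [DecidableEq m]
    [NormedAddCommGroup E] [NormedSpace ℝ E]
    (M : E → Matrix m m ℝ) {x : E}
    (hM : ∀ i j, DifferentiableAt ℝ (fun y => M y i j) x)
    (hdet : (M x).det ≠ 0) (i j : m) :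
    DifferentiableAt ℝ (fun y => (M y)⁻¹ i j) x := by
  have hrepr : ∀ y, (M y)⁻¹ i j = ((M y).det)⁻¹ * (M y).adjugate i j := by
    intro y
    rw [Matrix.inv_def, Matrix.smul_apply, Ring.inverse_eq_inv', smul_eq_mul]
  simp only [hrepr]
  refine DifferentiableAt.mul ((diffAt_matrix_det M hM).inv hdet) ?_
  simp only [Matrix.adjugate_apply]
  refine diffAt_matrix_det _ fun k l => ?_
  simp only [Matrix.updateRow_apply]
  by_cases hk : k = j <;> simp [hk, hM]


variable {p : ℕ}

lemma fderiv_component (h : (Fin n → ℝ) → (Fin p → ℝ)) (hd : Differentiable ℝ h)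
    (y w : Fin n → ℝ) (i : Fin p) :
    fderiv ℝ (fun z => h z i) y w = fderiv ℝ h y w i := by
  have : (fun z => h z i) = (ContinuousLinearMap.proj (R := ℝ) (φ := fun _ : Fin p => ℝ) i) ∘ h :=
    rfl
  rw [this, fderiv_comp y ((ContinuousLinearMap.proj i).differentiableAt) (hd y)]
  simp [ContinuousLinearMap.fderiv]

lemma jac_pdv (h : (Fin n → ℝ) → (Fin p → ℝ)) (hd : Differentiable ℝ h)
    (y : Fin n → ℝ) (i : Fin p) (b : Fin n) :
    jacobianM h y i b = pdv (fun z => h z i) b y := by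
  rw [jacobianM, pdv, fderiv_component h hd]
  rfl

lemma jac_entry_diff (h : (Fin n → ℝ) → (Fin p → ℝ)) (hh : ContDiff ℝ 2 h)
    (i : Fin p) (b : Fin n) :
    Differentiable ℝ (fun y => jacobianM h y i b) := by
  have h2 : ContDiff ℝ 2 (fun z => h z i) :=
    (ContinuousLinearMap.proj (R := ℝ) (φ := fun _ : Fin p => ℝ) i).contDiff.comp hh
  have h3 : ContDiff ℝ 1 (fderiv ℝ (fun z => h z i)) := by
    have := h2.fderiv_right (m := 1) (by norm_num)
    exact this
  have h4 : Differentiable ℝ (fun y => fderiv ℝ (fun z => h z i) y (Pi.single b 1)) := by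
    exact (ContinuousLinearMap.apply ℝ ℝ (Pi.single b 1 : Fin n → ℝ)).differentiable.comp
      (h3.differentiable one_ne_zero)
  have heq : (fun y => jacobianM h y i b)
      = fun y => fderiv ℝ (fun z => h z i) y (Pi.single b 1) := by
    funext y
    rw [jac_pdv h (hh.differentiable (by norm_num)) y i b, pdv]
  rw [heq]
  exact h4

lemma surjective_of_rank (J : Matrix (Fin p) (Fin n) ℝ) (hr : J.rank = p) :
    ∀ z : Fin p → ℝ, ∃ u, J *ᵥ u = z := by
  have htop : LinearMap.range J.mulVecLin = ⊤ := by
    apply Submodule.eq_top_of_finrank_eq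
    rw [← Matrix.rank, hr, Module.finrank_fin_fun]
  intro z
  have : z ∈ LinearMap.range J.mulVecLin := htop ▸ Submodule.mem_top
  obtain ⟨u, hu⟩ := this
  exact ⟨u, by rwa [Matrix.mulVecLin_apply] at hu⟩

lemma vecMul_eq_zero_of_rank (J : Matrix (Fin p) (Fin n) ℝ) (hr : J.rank = p)
    {z : Fin p → ℝ} (hz : z ᵥ* J = 0) : z = 0 := by
  obtain ⟨u, hu⟩ := surjective_of_rank J hr z
  have h2 : z ⬝ᵥ (J *ᵥ u) = 0 := by
    rw [Matrix.dotProduct_mulVec, hz, zero_dotProduct]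
  rw [hu] at h2
  exact dotProduct_self_eq_zero.mp h2

lemma posdef_JPinJT (J : Matrix (Fin p) (Fin n) ℝ) (hr : J.rank = p)
    (Pin : Matrix (Fin n) (Fin n) ℝ) (hPin : Pin.PosDef) :
    (J * Pin * Jᵀ).PosDef := by
  refine Matrix.PosDef.of_dotProduct_mulVec_pos ?_ ?_
  · have hsym : Pinᵀ = Pin := by
      have := hPin.isHermitian
      simpa [Matrix.IsHermitian, Matrix.conjTranspose_eq_transpose_of_trivial] using this
    show (J * Pin * Jᵀ)ᴴ = J * Pin * Jᵀ
    have : (J * Pin * Jᵀ)ᴴ = (J * Pin * Jᵀ)ᵀ := by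
      ext i j; simp [Matrix.conjTranspose_apply]
    rw [this]
    rw [Matrix.transpose_mul, Matrix.transpose_mul, Matrix.transpose_transpose, hsym,
      Matrix.mul_assoc]
  · intro z hz
    have hw : z ᵥ* J ≠ 0 := fun hzero => hz (vecMul_eq_zero_of_rank J hr hzero)
    have hstar : (star z : Fin p → ℝ) = z := by ext i; simp
    rw [hstar]
    have hmv : (J * Pin * Jᵀ) *ᵥ z = J *ᵥ (Pin *ᵥ (Jᵀ *ᵥ z)) := by
      rw [← Matrix.mulVec_mulVec, ← Matrix.mulVec_mulVec]
    rw [hmv, Matrix.dotProduct_mulVec, ← Matrix.mulVec_transpose]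
    have := hPin.dotProduct_mulVec_pos (x := Jᵀ *ᵥ z) (by rwa [Matrix.mulVec_transpose])
    have hstar2 : (star (Jᵀ *ᵥ z) : Fin n → ℝ) = Jᵀ *ᵥ z := by ext i; simp
    rwa [hstar2] at this

lemma sum_rot {α β γ : Type*} [Fintype α] [Fintype β] [Fintype γ]
    (f : α → β → γ → ℝ) :
    ∑ a, ∑ b, ∑ d, f a b d = ∑ d, ∑ a, ∑ b, f a b d :=
  (Finset.sum_congr rfl fun a _ => Finset.sum_comm).trans Finset.sum_comm

noncomputable def Hvec (h : (Fin n → ℝ) → (Fin p → ℝ)) (x v : Fin n → ℝ) (i : Fin p) : ℝ :=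
  ∑ a, ∑ b, v a * v b * pdv (fun y => pdv (fun z => h z i) b y) a x

noncomputable def Gvec (M : (Fin n → ℝ) → Matrix (Fin n) (Fin n) ℝ) (x v : Fin n → ℝ)
    (d : Fin n) : ℝ :=
  fderiv ℝ (fun y => ∑ a, v a * M y a d) x v
    - (1 / 2) * fderiv ℝ (fun y => ∑ a, ∑ b, v a * v b * M y a b) x (Pi.single d 1)

lemma christoffel_contract (M : (Fin n → ℝ) → Matrix (Fin n) (Fin n) ℝ) (x v : Fin n → ℝ)
    (hM : ∀ a b, DifferentiableAt ℝ (fun y => M y a b) x) (c : Fin n) :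
    ∑ a, ∑ b, v a * v b * christoffelSym M c a b x = ∑ d, (M x)⁻¹ c d * Gvec M x v d := by
  have S1 : ∀ d : Fin n, ∑ a, ∑ b, v a * v b * pdv (fun y => M y a d) b x
      = fderiv ℝ (fun y => ∑ a, v a * M y a d) x v := fun d =>
    double_contract_eq_fderiv (fun a y => M y a d) v x (fun a => hM a d)
  have S2 : ∀ d : Fin n, ∑ a, ∑ b, v a * v b * pdv (fun y => M y b d) a x
      = fderiv ℝ (fun y => ∑ a, v a * M y a d) x v := by
    intro d
    rw [← S1 d, Finset.sum_comm]
    exact Finset.sum_congr rfl fun a _ => Finset.sum_congr rfl fun b _ => by ring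
  have S3 : ∀ d : Fin n, ∑ a, ∑ b, v a * v b * pdv (fun y => M y a b) d x
      = fderiv ℝ (fun y => ∑ a, ∑ b, v a * v b * M y a b) x (Pi.single d 1) := by
    intro d
    rw [double_contract_eq_pdv (fun a b y => M y a b) v x d (fun a b => hM a b)]
    rfl
  unfold christoffelSym
  calc ∑ a, ∑ b, v a * v b * ((1 / 2) * ∑ d, (M x)⁻¹ c d *
        (pdv (fun y => M y a d) b x + pdv (fun y => M y b d) a x - pdv (fun y => M y a b) d x))
      = ∑ a, ∑ b, ∑ d, (1 / 2) * ((M x)⁻¹ c d) *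
        (v a * v b * pdv (fun y => M y a d) b x + v a * v b * pdv (fun y => M y b d) a x
          - v a * v b * pdv (fun y => M y a b) d x) := by
        refine Finset.sum_congr rfl fun a _ => Finset.sum_congr rfl fun b _ => ?_
        rw [mul_comm (v a * v b), mul_assoc, Finset.sum_mul, Finset.mul_sum]
        refine Finset.sum_congr rfl fun d _ => by ring
    _ = ∑ d, ∑ a, ∑ b, (1 / 2) * ((M x)⁻¹ c d) *
        (v a * v b * pdv (fun y => M y a d) b x + v a * v b * pdv (fun y => M y b d) a x
          - v a * v b * pdv (fun y => M y a b) d x) := by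
        exact sum_rot _
    _ = ∑ d, (M x)⁻¹ c d * Gvec M x v d := by
        refine Finset.sum_congr rfl fun d _ => ?_
        simp only [← Finset.mul_sum]
        simp only [Finset.sum_sub_distrib, Finset.sum_add_distrib]
        rw [S1, S2, S3, Gvec]
        ring

lemma THsum_eq (h : (Fin n → ℝ) → (Fin p → ℝ)) (hd : Differentiable ℝ h)
    (M : (Fin n → ℝ) → Matrix (Fin n) (Fin n) ℝ) (x v : Fin n → ℝ)
    (hM : ∀ a b, DifferentiableAt ℝ (fun y => M y a b) x) (i : Fin p) :
    ∑ a, ∑ b, v a * v b *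
      (pdv (fun y => pdv (fun z => h z i) b y) a x
        - ∑ c, christoffelSym M c a b x * pdv (fun y => h y i) c x)
    = Hvec h x v i - ∑ c, jacobianM h x i c * ∑ d, (M x)⁻¹ c d * Gvec M x v d := by
  simp only [mul_sub, Finset.sum_sub_distrib]
  rw [Hvec]
  congr 1
  calc ∑ a, ∑ b, v a * v b * ∑ c, christoffelSym M c a b x * pdv (fun y => h y i) c x
      = ∑ a, ∑ b, ∑ c, jacobianM h x i c * (v a * v b * christoffelSym M c a b x) := by
        refine Finset.sum_congr rfl fun a _ => Finset.sum_congr rfl fun b _ => ?_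
        rw [Finset.mul_sum]
        refine Finset.sum_congr rfl fun c _ => ?_
        rw [← jac_pdv h hd x i c]
        ring
    _ = ∑ c, ∑ a, ∑ b, jacobianM h x i c * (v a * v b * christoffelSym M c a b x) := sum_rot _
    _ = ∑ c, jacobianM h x i c * ∑ d, (M x)⁻¹ c d * Gvec M x v d := by
        refine Finset.sum_congr rfl fun c _ => ?_
        simp only [← Finset.mul_sum]
        rw [christoffel_contract M x v hM c]

section Key

noncomputable def THsum (h : (Fin n → ℝ) → (Fin p → ℝ))
    (M : (Fin n → ℝ) → Matrix (Fin n) (Fin n) ℝ) (x v : Fin n → ℝ) (i : Fin p) : ℝ :=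
  ∑ a, ∑ b, v a * v b *
    (pdv (fun y => pdv (fun z => h z i) b y) a x
      - ∑ c, christoffelSym M c a b x * pdv (fun y => h y i) c x)

variable {h : (Fin n → ℝ) → (Fin p → ℝ)}
variable {P : (Fin n → ℝ) → Matrix (Fin n) (Fin n) ℝ}
variable {Q : (Fin p → ℝ) → Matrix (Fin p) (Fin p) ℝ}

lemma u_fderiv (hh : ContDiff ℝ 2 h) (x v : Fin n → ℝ) (k : Fin p) :
    fderiv ℝ (fun y => ∑ a, v a * jacobianM h y k a) x v = Hvec h x v k := by
  have hd : Differentiable ℝ h := hh.differentiable (by norm_num)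
  rw [fderiv_sum_const_mul _ v x v (fun a => (jac_entry_diff h hh k a) x)]
  rw [Hvec, Finset.sum_comm]
  refine Finset.sum_congr rfl fun a _ => ?_
  rw [clm_apply_eq_sum (fderiv ℝ (fun y => jacobianM h y k a) x) v, Finset.mul_sum]
  refine Finset.sum_congr rfl fun b _ => ?_
  have hfun : (fun y => jacobianM h y k a) = fun y => pdv (fun z => h z k) a y := by
    funext y; exact jac_pdv h hd y k a
  rw [← pdv, hfun]
  ring

lemma entry_expand (Jf : Matrix (Fin p) (Fin n) ℝ) (Sf : Matrix (Fin p) (Fin p) ℝ)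
    (a d : Fin n) :
    (Jfᵀ * Sf * Jf) a d = ∑ i', ∑ j', Jf i' a * Sf i' j' * Jf j' d := by
  calc (Jfᵀ * Sf * Jf) a d = ∑ j', (∑ i', Jf i' a * Sf i' j') * Jf j' d := by
        simp [Matrix.mul_apply, Matrix.transpose_apply]
    _ = ∑ j', ∑ i', Jf i' a * Sf i' j' * Jf j' d :=
        Finset.sum_congr rfl fun j' _ => Finset.sum_mul _ _ _
    _ = ∑ i', ∑ j', Jf i' a * Sf i' j' * Jf j' d := Finset.sum_comm

lemma Gvec_mod (hh : ContDiff ℝ 2 h) {x v : Fin n → ℝ}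
    (hv : (jacobianM h x).mulVec v = 0)
    (Pf : (Fin n → ℝ) → Matrix (Fin n) (Fin n) ℝ)
    (hPf : ∀ a b, DifferentiableAt ℝ (fun y => Pf y a b) x)
    (Sf : (Fin n → ℝ) → Matrix (Fin p) (Fin p) ℝ)
    (hSf : ∀ i j, DifferentiableAt ℝ (fun y => Sf y i j) x) (d : Fin n) :
    Gvec (fun y => Pf y + (jacobianM h y)ᵀ * Sf y * jacobianM h y) x v d
      = Gvec Pf x v d
        + ∑ i', ∑ j', (Hvec h x v i' * Sf x i' j') * jacobianM h x j' d := by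
  classical
  have hd : Differentiable ℝ h := hh.differentiable (by norm_num)
  set u : Fin p → (Fin n → ℝ) → ℝ := fun k y => ∑ a, v a * jacobianM h y k a with hu
  have hu_diff : ∀ k, DifferentiableAt ℝ (u k) x :=
    fun k => DifferentiableAt.fun_sum fun a _ => ((jac_entry_diff h hh k a) x).const_mul (v a)
  have hu0 : ∀ k, u k x = 0 := by
    intro k
    have := congrFun hv k
    rw [Matrix.mulVec, dotProduct] at this
    rw [hu]
    simp only [Pi.zero_apply] at this
    rw [← this]
    exact Finset.sum_congr rfl fun a _ => mul_comm _ _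
  have hufd : ∀ k, fderiv ℝ (u k) x v = Hvec h x v k := fun k => u_fderiv hh x v k
  have hJdiff : ∀ k a, DifferentiableAt ℝ (fun y => jacobianM h y k a) x :=
    fun k a => (jac_entry_diff h hh k a) x
  -- first piece
  have hp1 : (fun y => ∑ a, v a * (Pf y + (jacobianM h y)ᵀ * Sf y * jacobianM h y) a d)
      = fun y => (∑ a, v a * Pf y a d)
        + ∑ i', ∑ j', (u i' y * Sf y i' j') * jacobianM h y j' d := by
    funext y
    simp only [Matrix.add_apply, mul_add, Finset.sum_add_distrib]
    congr 1
    calc ∑ a, v a * ((jacobianM h y)ᵀ * Sf y * jacobianM h y) a d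
        = ∑ a, ∑ i', ∑ j',
            v a * (jacobianM h y i' a * Sf y i' j' * jacobianM h y j' d) := by
          refine Finset.sum_congr rfl fun a _ => ?_
          rw [entry_expand, Finset.mul_sum]
          exact Finset.sum_congr rfl fun i' _ => Finset.mul_sum _ _ _
      _ = ∑ j', ∑ a, ∑ i',
            v a * (jacobianM h y i' a * Sf y i' j' * jacobianM h y j' d) := sum_rot _
      _ = ∑ i', ∑ j', ∑ a,
            v a * (jacobianM h y i' a * Sf y i' j' * jacobianM h y j' d) := sum_rot _
      _ = ∑ i', ∑ j', (u i' y * Sf y i' j') * jacobianM h y j' d := by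
          refine Finset.sum_congr rfl fun i' _ => Finset.sum_congr rfl fun j' _ => ?_
          rw [hu]
          simp only [Finset.sum_mul]
          exact Finset.sum_congr rfl fun a _ => by ring
  have hterm_diff : ∀ (i' j' : Fin p),
      DifferentiableAt ℝ (fun y => (u i' y * Sf y i' j') * jacobianM h y j' d) x :=
    fun i' j' => (((hu_diff i').mul (hSf i' j')).mul (hJdiff j' d))
  have hterm : ∀ (i' j' : Fin p),
      fderiv ℝ (fun y => (u i' y * Sf y i' j') * jacobianM h y j' d) x v
        = (Hvec h x v i' * Sf x i' j') * jacobianM h x j' d := by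
    intro i' j'
    rw [fderiv_fun_mul (c := fun y => u i' y * Sf y i' j') ((hu_diff i').mul (hSf i' j')) (hJdiff j' d)]
    rw [fderiv_fun_mul (hu_diff i') (hSf i' j')]
    simp only [hu0 i', zero_mul, zero_smul, add_zero, zero_add,
      ContinuousLinearMap.add_apply, ContinuousLinearMap.smul_apply, smul_eq_mul]
    rw [hufd i']
    ring
  -- second piece
  have hp2 : (fun y => ∑ a, ∑ b, v a * v b
        * (Pf y + (jacobianM h y)ᵀ * Sf y * jacobianM h y) a b)
      = fun y => (∑ a, ∑ b, v a * v b * Pf y a b)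
        + ∑ i', ∑ j', (u i' y * Sf y i' j') * u j' y := by
    funext y
    simp only [Matrix.add_apply, mul_add, Finset.sum_add_distrib]
    congr 1
    calc ∑ a, ∑ b, v a * v b * ((jacobianM h y)ᵀ * Sf y * jacobianM h y) a b
        = ∑ a, v a * ∑ i', ∑ j',
            (jacobianM h y i' a * Sf y i' j') * u j' y := by
          refine Finset.sum_congr rfl fun a _ => ?_
          calc ∑ b, v a * v b * ((jacobianM h y)ᵀ * Sf y * jacobianM h y) a b
              = v a * ∑ b, ∑ i', ∑ j',
                  v b * (jacobianM h y i' a * Sf y i' j' * jacobianM h y j' b) := by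
                rw [Finset.mul_sum]
                refine Finset.sum_congr rfl fun b _ => ?_
                rw [entry_expand]
                simp only [Finset.mul_sum]
                exact Finset.sum_congr rfl fun i' _ =>
                  Finset.sum_congr rfl fun j' _ => by ring
            _ = v a * ∑ i', ∑ j', ∑ b,
                  v b * (jacobianM h y i' a * Sf y i' j' * jacobianM h y j' b) := by
                rw [sum_rot, sum_rot]
            _ = v a * ∑ i', ∑ j', (jacobianM h y i' a * Sf y i' j') * u j' y := by
                congr 1
                refine Finset.sum_congr rfl fun i' _ => Finset.sum_congr rfl fun j' _ => ?_
                rw [hu, Finset.mul_sum]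
                exact Finset.sum_congr rfl fun b _ => by ring
      _ = ∑ i', ∑ j', ∑ a, v a * ((jacobianM h y i' a * Sf y i' j') * u j' y) := by
          simp only [Finset.mul_sum]
          rw [sum_rot, sum_rot]
      _ = ∑ i', ∑ j', (u i' y * Sf y i' j') * u j' y := by
          refine Finset.sum_congr rfl fun i' _ => Finset.sum_congr rfl fun j' _ => ?_
          rw [hu]
          simp only [Finset.sum_mul]
          exact Finset.sum_congr rfl fun a _ => by ring
  -- assembly
  have hA1 : DifferentiableAt ℝ (fun y => ∑ a, v a * Pf y a d) x :=
    DifferentiableAt.fun_sum fun a _ => (hPf a d).const_mul (v a)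
  have hA2 : DifferentiableAt ℝ
      (fun y => ∑ i', ∑ j', (u i' y * Sf y i' j') * jacobianM h y j' d) x :=
    DifferentiableAt.fun_sum fun i' _ => DifferentiableAt.fun_sum fun j' _ => hterm_diff i' j'
  have hB1 : DifferentiableAt ℝ (fun y => ∑ a, ∑ b, v a * v b * Pf y a b) x :=
    DifferentiableAt.fun_sum fun a _ => DifferentiableAt.fun_sum fun b _ =>
      (hPf a b).const_mul _
  have hterm2_diff : ∀ (i' j' : Fin p),
      DifferentiableAt ℝ (fun y => (u i' y * Sf y i' j') * u j' y) x :=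
    fun i' j' => ((hu_diff i').mul (hSf i' j')).mul (hu_diff j')
  have hB2 : DifferentiableAt ℝ
      (fun y => ∑ i', ∑ j', (u i' y * Sf y i' j') * u j' y) x :=
    DifferentiableAt.fun_sum fun i' _ => DifferentiableAt.fun_sum fun j' _ => hterm2_diff i' j'
  have hfd1 : fderiv ℝ
      (fun y => ∑ i', ∑ j', (u i' y * Sf y i' j') * jacobianM h y j' d) x v
      = ∑ i', ∑ j', (Hvec h x v i' * Sf x i' j') * jacobianM h x j' d := by
    rw [fderiv_fun_sum fun i' _ => DifferentiableAt.fun_sum fun j' _ => hterm_diff i' j']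
    simp only [ContinuousLinearMap.coe_sum', Finset.sum_apply]
    refine Finset.sum_congr rfl fun i' _ => ?_
    rw [fderiv_fun_sum fun j' _ => hterm_diff i' j']
    simp only [ContinuousLinearMap.coe_sum', Finset.sum_apply]
    exact Finset.sum_congr rfl fun j' _ => hterm i' j'
  have hfd2 : fderiv ℝ
      (fun y => ∑ i', ∑ j', (u i' y * Sf y i' j') * u j' y) x (Pi.single d 1)
      = 0 := by
    rw [fderiv_fun_sum fun i' _ => DifferentiableAt.fun_sum fun j' _ => hterm2_diff i' j']
    simp only [ContinuousLinearMap.coe_sum', Finset.sum_apply]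
    refine Finset.sum_eq_zero fun i' _ => ?_
    rw [fderiv_fun_sum fun j' _ => hterm2_diff i' j']
    simp only [ContinuousLinearMap.coe_sum', Finset.sum_apply]
    refine Finset.sum_eq_zero fun j' _ => ?_
    rw [fderiv_fun_mul (c := fun y => u i' y * Sf y i' j') ((hu_diff i').mul (hSf i' j')) (hu_diff j')]
    simp [hu0 i', hu0 j']
  rw [Gvec, Gvec, hp1, hp2, fderiv_fun_add hA1 hA2, fderiv_fun_add hB1 hB2]
  simp only [ContinuousLinearMap.add_apply]
  rw [hfd1, hfd2]
  ring

section Alg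

variable {J : Matrix (Fin p) (Fin n) ℝ} {Px : Matrix (Fin n) (Fin n) ℝ}
  {Qx : Matrix (Fin p) (Fin p) ℝ}

lemma JN_eq (hPdet : Px.det ≠ 0) (hAdet : (J * Px⁻¹ * Jᵀ).det ≠ 0) (hQdet : Qx.det ≠ 0) :
    J * (Px⁻¹ + Px⁻¹ * Jᵀ *
        ((J * Px⁻¹ * Jᵀ)⁻¹ * Qx⁻¹ * (J * Px⁻¹ * Jᵀ)⁻¹ - (J * Px⁻¹ * Jᵀ)⁻¹) * J * Px⁻¹)
      = Qx⁻¹ * (J * Px⁻¹ * Jᵀ)⁻¹ * (J * Px⁻¹) := by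
  set Pin := Px⁻¹ with hPin
  set A := J * Pin * Jᵀ with hAdef
  set Ai := A⁻¹ with hAidef
  set Qi := Qx⁻¹ with hQidef
  set C := Ai * Qi * Ai - Ai with hCdef
  have hAAi : A * Ai = 1 := Matrix.mul_nonsing_inv _ (Ne.isUnit hAdet)
  have h2 : J * (Pin + Pin * Jᵀ * C * J * Pin) = J * Pin + A * (C * (J * Pin)) := by
    rw [Matrix.mul_add]
    congr 1
    rw [hAdef]
    simp only [Matrix.mul_assoc]
  have hAC : A * C = Qi * Ai - 1 := by
    rw [hCdef, Matrix.mul_sub, hAAi, ← Matrix.mul_assoc, ← Matrix.mul_assoc, hAAi,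
      Matrix.one_mul]
  have h3 : A * (C * (J * Pin)) = (Qi * Ai - 1) * (J * Pin) := by
    rw [← Matrix.mul_assoc, hAC]
  rw [h2, h3, Matrix.sub_mul, Matrix.one_mul, Matrix.mul_assoc]
  abel

lemma block_inverse (hPdet : Px.det ≠ 0) (hAdet : (J * Px⁻¹ * Jᵀ).det ≠ 0)
    (hQdet : Qx.det ≠ 0) :
    (Px + Jᵀ * (Qx - (J * Px⁻¹ * Jᵀ)⁻¹) * J) *
      (Px⁻¹ + Px⁻¹ * Jᵀ *
        ((J * Px⁻¹ * Jᵀ)⁻¹ * Qx⁻¹ * (J * Px⁻¹ * Jᵀ)⁻¹ - (J * Px⁻¹ * Jᵀ)⁻¹) * J * Px⁻¹) = 1 := by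
  have hJN := JN_eq (J := J) hPdet hAdet hQdet
  set Pin := Px⁻¹ with hPin
  set A := J * Pin * Jᵀ with hAdef
  set Ai := A⁻¹ with hAidef
  set Qi := Qx⁻¹ with hQidef
  set C := Ai * Qi * Ai - Ai with hCdef
  set N := Pin + Pin * Jᵀ * C * J * Pin with hNdef
  set S := Qx - Ai with hSdef
  have hPPin : Px * Pin = 1 := Matrix.mul_nonsing_inv _ (Ne.isUnit hPdet)
  have hQQi : Qx * Qi = 1 := Matrix.mul_nonsing_inv _ (Ne.isUnit hQdet)
  have hPN : Px * N = 1 + Jᵀ * (C * (J * Pin)) := by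
    rw [hNdef, Matrix.mul_add, hPPin]
    congr 1
    calc Px * (Pin * Jᵀ * C * J * Pin)
        = (Px * Pin) * (Jᵀ * (C * (J * Pin))) := by simp only [Matrix.mul_assoc]
      _ = Jᵀ * (C * (J * Pin)) := by rw [hPPin, Matrix.one_mul]
  have hSQiAi : S * (Qi * Ai) = -C := by
    rw [hSdef, Matrix.sub_mul, ← Matrix.mul_assoc, hQQi, Matrix.one_mul, hCdef, neg_sub,
      Matrix.mul_assoc]
  have hterm2 : Jᵀ * S * J * N = -(Jᵀ * (C * (J * Pin))) := by
    calc Jᵀ * S * J * N = Jᵀ * (S * (J * N)) := by simp only [Matrix.mul_assoc]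
      _ = Jᵀ * (S * (Qi * Ai * (J * Pin))) := by rw [hJN]
      _ = Jᵀ * ((S * (Qi * Ai)) * (J * Pin)) := by simp only [Matrix.mul_assoc]
      _ = Jᵀ * ((-C) * (J * Pin)) := by rw [hSQiAi]
      _ = -(Jᵀ * (C * (J * Pin))) := by rw [Matrix.neg_mul, Matrix.mul_neg]
  rw [Matrix.add_mul, hPN, hterm2]
  abel

lemma JNJS_eq (hPdet : Px.det ≠ 0) (hAdet : (J * Px⁻¹ * Jᵀ).det ≠ 0) (hQdet : Qx.det ≠ 0) :
    (Qx⁻¹ * (J * Px⁻¹ * Jᵀ)⁻¹ * (J * Px⁻¹)) * (Jᵀ * (Qx - (J * Px⁻¹ * Jᵀ)⁻¹))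
      = 1 - Qx⁻¹ * (J * Px⁻¹ * Jᵀ)⁻¹ := by
  set Pin := Px⁻¹ with hPin
  set A := J * Pin * Jᵀ with hAdef
  set Ai := A⁻¹ with hAidef
  set Qi := Qx⁻¹ with hQidef
  have hAiA : Ai * A = 1 := Matrix.nonsing_inv_mul _ (Ne.isUnit hAdet)
  have hQiQ : Qi * Qx = 1 := Matrix.nonsing_inv_mul _ (Ne.isUnit hQdet)
  calc (Qi * Ai * (J * Pin)) * (Jᵀ * (Qx - Ai))
      = Qi * (Ai * (A * (Qx - Ai))) := by
        rw [hAdef]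
        simp only [Matrix.mul_assoc]
    _ = Qi * (Qx - Ai) := by rw [← Matrix.mul_assoc Ai A, hAiA, Matrix.one_mul]
    _ = 1 - Qi * Ai := by rw [Matrix.mul_sub, hQiQ]

end Alg

lemma assemble {J : Matrix (Fin p) (Fin n) ℝ} {Pin N : Matrix (Fin n) (Fin n) ℝ}
    {B : Matrix (Fin p) (Fin p) ℝ} {JS : Matrix (Fin n) (Fin p) ℝ}
    (hJN : J * N = B * (J * Pin)) (hJNJS : (J * N) * JS = 1 - B)
    (w : Fin p → ℝ) (G : Fin n → ℝ) :
    (fun i => w i - (J *ᵥ (N *ᵥ (G + JS *ᵥ w))) i)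
      = B *ᵥ (fun i => w i - (J *ᵥ (Pin *ᵥ G)) i) := by
  have h1 : J *ᵥ (N *ᵥ (G + JS *ᵥ w)) = (J * N) *ᵥ G + ((J * N) * JS) *ᵥ w := by
    rw [Matrix.mulVec_add, Matrix.mulVec_mulVec, Matrix.mulVec_add, Matrix.mulVec_mulVec,
      Matrix.mulVec_mulVec, ← Matrix.mul_assoc]
  funext i
  rw [h1, hJNJS, hJN, Matrix.sub_mulVec, Matrix.one_mulVec]
  have h2 : (B * (J * Pin)) *ᵥ G = B *ᵥ ((J * Pin) *ᵥ G) := by rw [Matrix.mulVec_mulVec]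
  have h3 : (fun i => w i - (J *ᵥ (Pin *ᵥ G)) i) = w - (J * Pin) *ᵥ G := by
    funext i
    simp [Matrix.mulVec_mulVec]
  rw [h2, h3, Matrix.mulVec_sub]
  simp [Pi.sub_apply, Pi.add_apply]
  ring

lemma mulVec_conv (M1 : Matrix (Fin p) (Fin n) ℝ) (M2 : Matrix (Fin n) (Fin n) ℝ)
    (g : Fin n → ℝ) (i : Fin p) :
    ∑ c, M1 i c * ∑ d, M2 c d * g d = (M1 *ᵥ (M2 *ᵥ g)) i := by
  simp [Matrix.mulVec, dotProduct]

lemma key (hh : ContDiff ℝ 2 h)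
    (hPc : ∀ a b, ContDiff ℝ 1 fun x => P x a b)
    (hPsym : ∀ x, (P x).IsSymm) (hPpos : ∀ x, (P x).PosDef)
    (hQc : ∀ i j, ContDiff ℝ 1 fun y => Q y i j)
    (hQsym : ∀ y, (Q y).IsSymm) (hQpos : ∀ y, (Q y).PosDef)
    (x : Fin n → ℝ) (hr : (jacobianM h x).rank = p)
    (v : Fin n → ℝ) (hv : (jacobianM h x).mulVec v = 0) :
    (THsum h (fun x => P x + (jacobianM h x)ᵀ *
        (Q (h x) - (jacobianM h x * (P x)⁻¹ * (jacobianM h x)ᵀ)⁻¹) * jacobianM h x) x v)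
    = ((Q (h x))⁻¹ * (jacobianM h x * (P x)⁻¹ * (jacobianM h x)ᵀ)⁻¹) *ᵥ (THsum h P x v) := by
  classical
  have hd : Differentiable ℝ h := hh.differentiable (by norm_num)
  -- differentiability of entries
  have hJdiff : ∀ k a, DifferentiableAt ℝ (fun y => jacobianM h y k a) x :=
    fun k a => (jac_entry_diff h hh k a) x
  have hPdiff : ∀ a b, DifferentiableAt ℝ (fun y => P y a b) x :=
    fun a b => ((hPc a b).differentiable one_ne_zero) x
  have hPdet : (P x).det ≠ 0 := (hPpos x).det_pos.ne'
  have hPindiff : ∀ a b, DifferentiableAt ℝ (fun y => (P y)⁻¹ a b) x :=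
    fun a b => diffAt_matrix_inv P hPdiff hPdet a b
  have hAfdiff : ∀ i j, DifferentiableAt ℝ
      (fun y => (jacobianM h y * (P y)⁻¹ * (jacobianM h y)ᵀ) i j) x := by
    intro i j
    have hfun : (fun y => (jacobianM h y * (P y)⁻¹ * (jacobianM h y)ᵀ) i j)
        = fun y => ∑ k, (∑ l, jacobianM h y i l * (P y)⁻¹ l k) * jacobianM h y j k := by
      funext y
      simp [Matrix.mul_apply, Matrix.transpose_apply]
    rw [hfun]
    exact DifferentiableAt.fun_sum fun k _ =>
      (DifferentiableAt.fun_sum fun l _ => (hJdiff i l).mul (hPindiff l k)).mul (hJdiff j k)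
  have hApos : (jacobianM h x * (P x)⁻¹ * (jacobianM h x)ᵀ).PosDef :=
    posdef_JPinJT (jacobianM h x) hr (P x)⁻¹ (hPpos x).inv
  have hAdet : (jacobianM h x * (P x)⁻¹ * (jacobianM h x)ᵀ).det ≠ 0 := hApos.det_pos.ne'
  have hAinvdiff : ∀ i j, DifferentiableAt ℝ
      (fun y => (jacobianM h y * (P y)⁻¹ * (jacobianM h y)ᵀ)⁻¹ i j) x :=
    fun i j => diffAt_matrix_inv _ hAfdiff hAdet i j
  have hSfdiff : ∀ i j, DifferentiableAt ℝ
      (fun y => (Q (h y) - (jacobianM h y * (P y)⁻¹ * (jacobianM h y)ᵀ)⁻¹) i j) x := by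
    intro i j
    have hQh : DifferentiableAt ℝ (fun y => Q (h y) i j) x :=
      DifferentiableAt.comp x (((hQc i j).differentiable one_ne_zero) (h x)) (hd x)
    have heq : (fun y => (Q (h y) - (jacobianM h y * (P y)⁻¹ * (jacobianM h y)ᵀ)⁻¹) i j)
        = fun y => Q (h y) i j - (jacobianM h y * (P y)⁻¹ * (jacobianM h y)ᵀ)⁻¹ i j := by
      funext y; simp [Matrix.sub_apply]
    rw [heq]
    exact hQh.sub (hAinvdiff i j)
  have hPmdiff : ∀ a b, DifferentiableAt ℝ (fun y => (P y + (jacobianM h y)ᵀ *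
      (Q (h y) - (jacobianM h y * (P y)⁻¹ * (jacobianM h y)ᵀ)⁻¹) * jacobianM h y) a b) x := by
    intro a b
    have hfun : (fun y => (P y + (jacobianM h y)ᵀ *
        (Q (h y) - (jacobianM h y * (P y)⁻¹ * (jacobianM h y)ᵀ)⁻¹) * jacobianM h y) a b)
        = fun y => P y a b + ∑ i', ∑ j', jacobianM h y i' a *
            (Q (h y) - (jacobianM h y * (P y)⁻¹ * (jacobianM h y)ᵀ)⁻¹) i' j'
            * jacobianM h y j' b := by
      funext y
      rw [Matrix.add_apply, entry_expand]
    rw [hfun]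
    exact (hPdiff a b).add (DifferentiableAt.fun_sum fun i' _ => DifferentiableAt.fun_sum fun j' _ =>
      ((hJdiff i' a).mul (hSfdiff i' j')).mul (hJdiff j' b))
  have hQdet : (Q (h x)).det ≠ 0 := (hQpos (h x)).det_pos.ne'
  -- symmetry of S at x
  have hPinT : ((P x)⁻¹)ᵀ = (P x)⁻¹ := by
    rw [Matrix.transpose_nonsing_inv, (hPsym x).eq]
  have hAT : (jacobianM h x * (P x)⁻¹ * (jacobianM h x)ᵀ)ᵀ
      = jacobianM h x * (P x)⁻¹ * (jacobianM h x)ᵀ := by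
    rw [Matrix.transpose_mul, Matrix.transpose_mul, Matrix.transpose_transpose, hPinT,
      Matrix.mul_assoc]
  have hST : (Q (h x) - (jacobianM h x * (P x)⁻¹ * (jacobianM h x)ᵀ)⁻¹)ᵀ
      = Q (h x) - (jacobianM h x * (P x)⁻¹ * (jacobianM h x)ᵀ)⁻¹ := by
    rw [Matrix.transpose_sub, Matrix.transpose_nonsing_inv, hAT, (hQsym (h x)).eq]
  -- inverse of the modified metric at x
  have hNinv : ((fun x => P x + (jacobianM h x)ᵀ *
      (Q (h x) - (jacobianM h x * (P x)⁻¹ * (jacobianM h x)ᵀ)⁻¹) * jacobianM h x) x)⁻¹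
      = (P x)⁻¹ + (P x)⁻¹ * (jacobianM h x)ᵀ *
        ((jacobianM h x * (P x)⁻¹ * (jacobianM h x)ᵀ)⁻¹ * (Q (h x))⁻¹ *
            (jacobianM h x * (P x)⁻¹ * (jacobianM h x)ᵀ)⁻¹
          - (jacobianM h x * (P x)⁻¹ * (jacobianM h x)ᵀ)⁻¹) * jacobianM h x * (P x)⁻¹ :=
    Matrix.inv_eq_right_inv (block_inverse hPdet hAdet hQdet)
  have hJN := JN_eq (J := jacobianM h x) (Px := P x) (Qx := Q (h x)) hPdet hAdet hQdet
  have hJNJS : jacobianM h x *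
      ((P x)⁻¹ + (P x)⁻¹ * (jacobianM h x)ᵀ *
        ((jacobianM h x * (P x)⁻¹ * (jacobianM h x)ᵀ)⁻¹ * (Q (h x))⁻¹ *
            (jacobianM h x * (P x)⁻¹ * (jacobianM h x)ᵀ)⁻¹
          - (jacobianM h x * (P x)⁻¹ * (jacobianM h x)ᵀ)⁻¹) * jacobianM h x * (P x)⁻¹) *
      ((jacobianM h x)ᵀ * (Q (h x) - (jacobianM h x * (P x)⁻¹ * (jacobianM h x)ᵀ)⁻¹)ᵀ)
      = 1 - (Q (h x))⁻¹ * (jacobianM h x * (P x)⁻¹ * (jacobianM h x)ᵀ)⁻¹ := by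
    rw [hST, hJN]
    exact JNJS_eq hPdet hAdet hQdet
  -- Gvec of the modified metric
  have hW : ∀ d, ∑ i', ∑ j', (Hvec h x v i' *
        (Q (h x) - (jacobianM h x * (P x)⁻¹ * (jacobianM h x)ᵀ)⁻¹) i' j')
        * jacobianM h x j' d
      = (((jacobianM h x)ᵀ *
          (Q (h x) - (jacobianM h x * (P x)⁻¹ * (jacobianM h x)ᵀ)⁻¹)ᵀ) *ᵥ Hvec h x v) d := by
    intro d
    rw [Matrix.mulVec, dotProduct]
    simp only [Matrix.mul_apply, Matrix.transpose_apply, Finset.sum_mul]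
    exact Finset.sum_congr rfl fun i' _ => Finset.sum_congr rfl fun j' _ => by ring
  have hGmod : ∀ d, Gvec (fun x => P x + (jacobianM h x)ᵀ *
        (Q (h x) - (jacobianM h x * (P x)⁻¹ * (jacobianM h x)ᵀ)⁻¹) * jacobianM h x) x v d
      = Gvec P x v d + ((((jacobianM h x)ᵀ *
          (Q (h x) - (jacobianM h x * (P x)⁻¹ * (jacobianM h x)ᵀ)⁻¹)ᵀ)) *ᵥ Hvec h x v) d := by
    intro d
    rw [← hW d]
    exact Gvec_mod hh hv P hPdiff
      (fun y => Q (h y) - (jacobianM h y * (P y)⁻¹ * (jacobianM h y)ᵀ)⁻¹) hSfdiff d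
  -- THsum identities
  have hTP : THsum h P x v
      = fun i => Hvec h x v i - (jacobianM h x *ᵥ ((P x)⁻¹ *ᵥ Gvec P x v)) i := by
    funext i
    have h0 : THsum h P x v i = Hvec h x v i - ∑ c, jacobianM h x i c *
        ∑ d, (P x)⁻¹ c d * Gvec P x v d := THsum_eq h hd P x v hPdiff i
    rw [h0, mulVec_conv]
  have hTmod : THsum h (fun x => P x + (jacobianM h x)ᵀ *
        (Q (h x) - (jacobianM h x * (P x)⁻¹ * (jacobianM h x)ᵀ)⁻¹) * jacobianM h x) x v
      = fun i => Hvec h x v i - (jacobianM h x *ᵥ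
          (((P x)⁻¹ + (P x)⁻¹ * (jacobianM h x)ᵀ *
            ((jacobianM h x * (P x)⁻¹ * (jacobianM h x)ᵀ)⁻¹ * (Q (h x))⁻¹ *
                (jacobianM h x * (P x)⁻¹ * (jacobianM h x)ᵀ)⁻¹
              - (jacobianM h x * (P x)⁻¹ * (jacobianM h x)ᵀ)⁻¹) * jacobianM h x * (P x)⁻¹)
            *ᵥ (Gvec P x v + ((jacobianM h x)ᵀ *
              (Q (h x) - (jacobianM h x * (P x)⁻¹ * (jacobianM h x)ᵀ)⁻¹)ᵀ)
              *ᵥ Hvec h x v))) i := by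
    funext i
    have h0 : THsum h (fun x => P x + (jacobianM h x)ᵀ *
          (Q (h x) - (jacobianM h x * (P x)⁻¹ * (jacobianM h x)ᵀ)⁻¹) * jacobianM h x) x v i
        = Hvec h x v i - ∑ c, jacobianM h x i c *
          ∑ d, ((fun x => P x + (jacobianM h x)ᵀ *
            (Q (h x) - (jacobianM h x * (P x)⁻¹ * (jacobianM h x)ᵀ)⁻¹) * jacobianM h x) x)⁻¹ c d
            * Gvec (fun x => P x + (jacobianM h x)ᵀ *
              (Q (h x) - (jacobianM h x * (P x)⁻¹ * (jacobianM h x)ᵀ)⁻¹) * jacobianM h x) x v d :=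
      THsum_eq h hd _ x v hPmdiff i
    rw [h0, hNinv]
    simp only [hGmod]
    rw [mulVec_conv]
    congr 2
  rw [hTP, hTmod]
  exact assemble hJN hJNJS (Hvec h x v) (Gvec P x v)

end Key


/-- The tangential-Hessian condition holds for the metric `P` on `Ω` iff it holds for the
modified metric `P_mod(x) = P(x) + Dh(x)ᵀ·(Q(h(x)) − (Dh(x)·P(x)⁻¹·Dh(x)ᵀ)⁻¹)·Dh(x)`. -/
theorem stmt_4 {n p : ℕ} (hp1 : 1 ≤ p) (hpn : p ≤ n)
    (Ω : Set (Fin n → ℝ)) (hΩ : IsOpen Ω)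
    (h : (Fin n → ℝ) → (Fin p → ℝ)) (hh : ContDiff ℝ 2 h)
    (hrank : ∀ x ∈ Ω, (jacobianM h x).rank = p)
    (P : (Fin n → ℝ) → Matrix (Fin n) (Fin n) ℝ)
    (hPc : ∀ a b, ContDiff ℝ 1 fun x => P x a b)
    (hPsym : ∀ x, (P x).IsSymm) (hPpos : ∀ x, (P x).PosDef)
    (Q : (Fin p → ℝ) → Matrix (Fin p) (Fin p) ℝ)
    (hQc : ∀ i j, ContDiff ℝ 1 fun y => Q y i j)
    (hQsym : ∀ y, (Q y).IsSymm) (hQpos : ∀ y, (Q y).PosDef) :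
    TangentHessianZero h P Ω ↔
      TangentHessianZero h
        (fun x => P x + (jacobianM h x)ᵀ *
          (Q (h x) - (jacobianM h x * (P x)⁻¹ * (jacobianM h x)ᵀ)⁻¹) * jacobianM h x) Ω := by
  constructor
  · intro hT x hx i v hv
    show THsum h (fun x => P x + (jacobianM h x)ᵀ *
        (Q (h x) - (jacobianM h x * (P x)⁻¹ * (jacobianM h x)ᵀ)⁻¹) * jacobianM h x) x v i = 0
    have hk := congrFun (key hh hPc hPsym hPpos hQc hQsym hQpos x (hrank x hx) v hv) i
    rw [hk]
    have hz : ∀ j, THsum h P x v j = 0 := fun j => hT x hx j v hv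
    simp [Matrix.mulVec, dotProduct, hz]
  · intro hT x hx i v hv
    show THsum h P x v i = 0
    have hk := key hh hPc hPsym hPpos hQc hQsym hQpos x (hrank x hx) v hv
    have hz : THsum h (fun x => P x + (jacobianM h x)ᵀ *
        (Q (h x) - (jacobianM h x * (P x)⁻¹ * (jacobianM h x)ᵀ)⁻¹) * jacobianM h x) x v = 0 := by
      funext j
      exact hT x hx j v hv
    rw [hz] at hk
    -- invertibility of B = Qi * Ai
    have hApos : (jacobianM h x * (P x)⁻¹ * (jacobianM h x)ᵀ).PosDef :=
      posdef_JPinJT (jacobianM h x) (hrank x hx) (P x)⁻¹ (hPpos x).inv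
    have hAU : IsUnit (jacobianM h x * (P x)⁻¹ * (jacobianM h x)ᵀ) := hApos.isUnit
    have hQU : IsUnit (Q (h x)) := (hQpos (h x)).isUnit
    have hBU : IsUnit ((Q (h x))⁻¹ * (jacobianM h x * (P x)⁻¹ * (jacobianM h x)ᵀ)⁻¹) :=
      (Matrix.isUnit_nonsing_inv_iff.mpr hQU).mul (Matrix.isUnit_nonsing_inv_iff.mpr hAU)
    set B := (Q (h x))⁻¹ * (jacobianM h x * (P x)⁻¹ * (jacobianM h x)ᵀ)⁻¹ with hBdef
    have hBiB : B⁻¹ * B = 1 := Matrix.nonsing_inv_mul B ((Matrix.isUnit_iff_isUnit_det B).mp hBU)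
    have : THsum h P x v = B⁻¹ *ᵥ (B *ᵥ THsum h P x v) := by
      rw [Matrix.mulVec_mulVec, hBiB, Matrix.one_mulVec]
    rw [this, ← hk]
    simp [Matrix.mulVec_zero]
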